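/- Let (V, ω) be a finite-dimensional n-plectic vector space and let W ⊆ V be a k-isotropic subspace, where 1 ≤ k ≤ n. Then for every k′ with k ≤ k′ ≤ n there exists a k′-Lagrangian subspace of V containing W. -/

import Mathlib

/-- The `k`-orthogonal complement `W^{⊥,k}` of a subspace `W` with respect to an
alternating `(n+1)`-form `ω`. -/
def kPerp {V : Type*} [AddCommGroup V] [Module ℝ V] {n : ℕ}
    (ω : AlternatingMap ℝ V ℝ (Fin (n + 1))) (W : Submodule ℝ V)
    (k : ℕ) (hk : k ≤ n) : Set V :=
  {v | ∀ w : Fin k → V, (∀ i, w i ∈ W) → ∀ u : Fin (n - k) → V,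
    ω (Fin.cons v (Fin.append w u) ∘
      Fin.cast (show n + 1 = k + (n - k) + 1 by omega)) = 0}

set_option linter.unusedSectionVars false

section
variable {V : Type*} [AddCommGroup V] [Module ℝ V] {n : ℕ}
  (ω : AlternatingMap ℝ V ℝ (Fin (n + 1)))

theorem eval_tuple {k : ℕ} (hk : k ≤ n) (v : V) (w : Fin k → V) (u : Fin (n - k) → V)
    (i : Fin (n + 1)) :
    (Fin.cons v (Fin.append w u) ∘
      Fin.cast (show n + 1 = k + (n - k) + 1 by omega)) i =
    if h0 : (i : ℕ) = 0 then v
    else if h1 : (i : ℕ) ≤ k then w ⟨(i : ℕ) - 1, by omega⟩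
    else u ⟨(i : ℕ) - 1 - k, by omega⟩ := by
  obtain ⟨iv, hi⟩ := i
  simp only [Function.comp_apply]
  match iv, hi with
  | 0, hi => rfl
  | m+1, hi =>
    have h1 : (Fin.cast (show n + 1 = k + (n - k) + 1 by omega) ⟨m+1, hi⟩ : Fin (k + (n-k) + 1))
        = Fin.succ ⟨m, by omega⟩ := by ext; simp
    rw [h1, Fin.cons_succ]
    by_cases hm : m < k
    · have h2 : (⟨m, by omega⟩ : Fin (k + (n-k))) = Fin.castAdd (n-k) ⟨m, hm⟩ := rfl
      rw [h2, Fin.append_left]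
      rw [dif_neg (by omega), dif_pos (by omega)]
      exact congrArg w (Fin.ext (by simp))
    · have h2 : (⟨m, by omega⟩ : Fin (k + (n-k))) = Fin.natAdd k ⟨m - k, by omega⟩ := by
        ext; simp; omega
      rw [h2, Fin.append_right]
      rw [dif_neg (by omega), dif_neg (by omega)]
      exact congrArg u (Fin.ext (by simp))

theorem mem_kPerp_iff {k : ℕ} (hk : k ≤ n) (W : Submodule ℝ V) (v : V) :
    v ∈ kPerp ω W k hk ↔ ∀ f : Fin (n + 1) → V, f 0 = v →
      (∀ i : Fin (n + 1), 0 < (i : ℕ) → (i : ℕ) ≤ k → f i ∈ W) → ω f = 0 := by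
  constructor
  · intro h f h0 hW
    have hfe : (Fin.cons v (Fin.append (fun i : Fin k => f ⟨i.1 + 1, by omega⟩)
        (fun j : Fin (n - k) => f ⟨k + 1 + j.1, by omega⟩)) ∘
        Fin.cast (show n + 1 = k + (n - k) + 1 by omega)) = f := by
      funext i
      rw [eval_tuple hk]
      split_ifs with ha hb
      · rw [← h0]; exact congrArg f (Fin.ext (by simp [ha]))
      · exact congrArg f (Fin.ext (by simp; omega))
      · exact congrArg f (Fin.ext (by simp; omega))
    rw [← hfe]
    exact h _ (fun i => hW _ (by simp) (by simp)) _
  · intro h w hw u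
    apply h
    · rw [eval_tuple hk]; simp
    · intro i hi0 hik
      rw [eval_tuple hk]
      rw [dif_neg (by omega), dif_pos (by omega)]
      exact hw _

theorem isotropic_iff {k : ℕ} (hk : k ≤ n) (L : Submodule ℝ V) :
    (L : Set V) ⊆ kPerp ω L k hk ↔
      ∀ f : Fin (n + 1) → V, (∀ i : Fin (n + 1), (i : ℕ) ≤ k → f i ∈ L) → ω f = 0 := by
  constructor
  · intro h f hf
    exact (mem_kPerp_iff ω hk L (f 0)).mp (h (hf 0 (by simp))) f rfl
      (fun i _ hik => hf i hik)
  · intro h x hx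
    rw [mem_kPerp_iff]
    intro f h0 hW
    apply h
    intro i hik
    rcases Nat.eq_zero_or_pos (i : ℕ) with h1 | h1
    · have : i = 0 := Fin.ext h1
      rw [this, h0]; exact hx
    · exact hW i h1 hik

theorem kPerp_mono_k {k k' : ℕ} (hk : k ≤ n) (hk' : k' ≤ n) (hkk : k ≤ k')
    (W : Submodule ℝ V) : kPerp ω W k hk ⊆ kPerp ω W k' hk' := by
  intro v hv
  rw [mem_kPerp_iff] at hv ⊢
  intro f h0 hW
  exact hv f h0 (fun i hi0 hik => hW i hi0 (le_trans hik hkk))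

theorem kPerp_anti {k : ℕ} (hk : k ≤ n) {W W' : Submodule ℝ V} (hWW : W ≤ W') :
    kPerp ω W' k hk ⊆ kPerp ω W k hk := by
  intro v hv
  rw [mem_kPerp_iff] at hv ⊢
  intro f h0 hW
  exact hv f h0 (fun i hi0 hik => hWW (hW i hi0 hik))

theorem extend_isotropic {k' : ℕ} (hk'1 : 1 ≤ k') (hk'n : k' ≤ n) (L : Submodule ℝ V)
    (hL : ∀ f : Fin (n + 1) → V, (∀ i : Fin (n + 1), (i : ℕ) ≤ k' → f i ∈ L) → ω f = 0)
    (v : V) (hv : v ∈ kPerp ω L k' hk'n) :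
    ∀ f : Fin (n + 1) → V, (∀ i : Fin (n + 1), (i : ℕ) ≤ k' → f i ∈ L ⊔ ℝ ∙ v) →
      ω f = 0 := by
  classical
  have pure : ∀ f : Fin (n+1) → V,
      (∀ i : Fin (n+1), (i:ℕ) ≤ k' → f i ∈ L ∨ f i = v) → ω f = 0 := by
    intro f hf
    by_cases hall : ∀ i : Fin (n+1), (i:ℕ) ≤ k' → f i ∈ L
    · exact hL f hall
    · push_neg at hall
      obtain ⟨i0, hi0k, hi0L⟩ := hall
      have hfi0 : f i0 = v := (hf i0 hi0k).resolve_left hi0L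
      by_cases hsec : ∃ j : Fin (n+1), j ≠ i0 ∧ (j:ℕ) ≤ k' ∧ f j ∉ L
      · obtain ⟨j, hj, hjk, hjL⟩ := hsec
        have hfj : f j = v := (hf j hjk).resolve_left hjL
        exact ω.map_eq_zero_of_eq f (hfj.trans hfi0.symm) hj
      · push_neg at hsec
        by_cases h00 : i0 = 0
        · subst h00
          exact (mem_kPerp_iff ω hk'n L v).mp hv f hfi0 (fun i hipos hik =>
            hsec i (fun h => by rw [h] at hipos; simp at hipos) hik)
        · have hne : (0 : Fin (n+1)) ≠ i0 := fun h => h00 h.symm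
          have hms := ω.map_swap f hne
          have hz : ω (f ∘ Equiv.swap (0 : Fin (n+1)) i0) = 0 := by
            apply (mem_kPerp_iff ω hk'n L v).mp hv
            · show f (Equiv.swap (0 : Fin (n+1)) i0 0) = v
              rw [Equiv.swap_apply_left]; exact hfi0
            · intro i hipos hik
              show f (Equiv.swap (0 : Fin (n+1)) i0 i) ∈ L
              rcases eq_or_ne i i0 with h | h
              · rw [h, Equiv.swap_apply_right]
                exact hsec 0 hne (by simp)
              · rw [Equiv.swap_apply_of_ne_of_ne
                  (fun h' => by rw [h'] at hipos; simp at hipos) h]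
                exact hsec i h hik
          rw [hms] at hz
          exact neg_eq_zero.mp hz
  have expand : ∀ m : ℕ, ∀ f : Fin (n+1) → V,
      (∀ i : Fin (n+1), (i:ℕ) < m → (i:ℕ) ≤ k' → f i ∈ L ⊔ ℝ ∙ v) →
      (∀ i : Fin (n+1), m ≤ (i:ℕ) → (i:ℕ) ≤ k' → (f i ∈ L ∨ f i = v)) → ω f = 0 := by
    intro m
    induction m with
    | zero => exact fun f _ hp => pure f (fun i hik => hp i (Nat.zero_le _) hik)
    | succ m ih =>
      intro f hmix hpure
      by_cases hm : m ≤ k'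
      · have him : m < n + 1 := by omega
        set im : Fin (n+1) := ⟨m, him⟩ with him_def
        have hmem : f im ∈ L ⊔ ℝ ∙ v := hmix im (by simp [him_def]) (by simp [him_def, hm])
        rw [Submodule.mem_sup] at hmem
        obtain ⟨l, hl, z, hz, hlz⟩ := hmem
        rw [Submodule.mem_span_singleton] at hz
        obtain ⟨c, rfl⟩ := hz
        have e1 : ω f = ω (Function.update f im l) + c • ω (Function.update f im v) := by
          conv_lhs => rw [show f = Function.update f im (l + c • v) by
            rw [hlz, Function.update_eq_self]]
          rw [ω.map_update_add, ω.map_update_smul]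
        have hA : ω (Function.update f im l) = 0 := by
          apply ih
          · intro i hi1 hi2
            rw [Function.update_of_ne (fun h => by rw [h] at hi1; simp [him_def] at hi1)]
            exact hmix i (by omega) hi2
          · intro i hi1 hi2
            rcases eq_or_ne i im with h | h
            · rw [h, Function.update_self]; exact Or.inl hl
            · rw [Function.update_of_ne h]
              have : m + 1 ≤ (i : ℕ) := by
                rcases Nat.lt_or_ge (i : ℕ) (m+1) with h' | h'
                · exfalso; exact h (Fin.ext (by simp [him_def]; omega))
                · exact h'
              exact hpure i this hi2
        have hB : ω (Function.update f im v) = 0 := by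
          apply ih
          · intro i hi1 hi2
            rw [Function.update_of_ne (fun h => by rw [h] at hi1; simp [him_def] at hi1)]
            exact hmix i (by omega) hi2
          · intro i hi1 hi2
            rcases eq_or_ne i im with h | h
            · rw [h, Function.update_self]; exact Or.inr rfl
            · rw [Function.update_of_ne h]
              have : m + 1 ≤ (i : ℕ) := by
                rcases Nat.lt_or_ge (i : ℕ) (m+1) with h' | h'
                · exfalso; exact h (Fin.ext (by simp [him_def]; omega))
                · exact h'
              exact hpure i this hi2
        rw [e1, hA, hB]; simp
      · exact ih f (fun i h1 h2 => hmix i (by omega) h2)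
          (fun i h1 h2 => absurd h1 (by omega))
  intro f hf
  exact expand (k'+1) f (fun i _ hik => hf i hik) (fun i h1 h2 => absurd h1 (by omega))
end

/-- if `W` is a `k`-isotropic subspace of a finite-dimensional
`n`-plectic vector space `(V, ω)` and `k ≤ k′ ≤ n`, then there is a `k′`-Lagrangian
subspace of `V` containing `W`. -/
theorem exists_lagrangian_containing_isotropic
    {V : Type*} [AddCommGroup V] [Module ℝ V] [FiniteDimensional ℝ V] {n : ℕ}
    (ω : AlternatingMap ℝ V ℝ (Fin (n + 1)))
    (hnondeg : ∀ v : V, (∀ u : Fin n → V, ω (Fin.cons v u) = 0) → v = 0)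
    (W : Submodule ℝ V) (k : ℕ) (hk1 : 1 ≤ k) (hkn : k ≤ n)
    (hiso : (W : Set V) ⊆ kPerp ω W k hkn)
    (k' : ℕ) (hk' : k ≤ k') (hk'n : k' ≤ n) :
    ∃ L : Submodule ℝ V, W ≤ L ∧ (L : Set V) = kPerp ω L k' hk'n := by
  classical
  have hiso' : ∀ f : Fin (n+1) → V, (∀ i : Fin (n+1), (i:ℕ) ≤ k' → f i ∈ W) → ω f = 0 :=
    (isotropic_iff ω hk'n W).mp (fun x hx => kPerp_mono_k ω hkn hk'n hk' W (hiso hx))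
  set S : Set (Submodule ℝ V) :=
    {L | W ≤ L ∧ ∀ f : Fin (n+1) → V, (∀ i : Fin (n+1), (i:ℕ) ≤ k' → f i ∈ L) → ω f = 0}
    with hS
  have hWS : W ∈ S := ⟨le_refl W, hiso'⟩
  obtain ⟨L, hLS, hmax⟩ := set_has_maximal_iff_noetherian.mpr inferInstance S ⟨W, hWS⟩
  refine ⟨L, hLS.1, ?_⟩
  apply Set.Subset.antisymm
  · exact (isotropic_iff ω hk'n L).mpr hLS.2
  · intro v hv
    have hext := extend_isotropic ω (le_trans hk1 hk') hk'n L hLS.2 v hv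
    have hLS' : (L ⊔ (ℝ ∙ v)) ∈ S :=
      ⟨le_trans hLS.1 le_sup_left, fun f hf => hext f hf⟩
    by_contra hvL
    apply hmax _ hLS'
    refine lt_of_le_of_ne le_sup_left (fun h => hvL ?_)
    rw [h]
    exact Submodule.mem_sup_right (Submodule.mem_span_singleton_self v)
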